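/- There is no almost P_{𝔰⁺}-point in ℕ*: for every free ultrafilter x on ℕ there is a family of at most 𝔰 members of x with no infinite pseudointersection. -/
import Mathlib


open Set Filter Cardinal

/-- `a ⊆* b` : `a` is almost contained in `b` (mod finite). -/
def almostLE (a b : Set ℕ) : Prop := (a \ b).Finite

/-- `f <* g` : eventual domination mod finite. -/
def domLT (f g : ℕ → ℕ) : Prop := {k | g k ≤ f k}.Finite

/-- The bounding number 𝔟. -/
noncomputable def bNum : Cardinal :=
  sInf { c | ∃ F : Set (ℕ → ℕ), Cardinal.mk F = c ∧ ∀ g : ℕ → ℕ, ∃ f ∈ F, ¬ domLT f g }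

/-- The dominating number 𝔡. -/
noncomputable def dNum : Cardinal :=
  sInf { c | ∃ F : Set (ℕ → ℕ), Cardinal.mk F = c ∧ ∀ g : ℕ → ℕ, ∃ f ∈ F, domLT g f }

/-- `c` reaps the family `A`. -/
def Reaps (c : Set ℕ) (A : Set (Set ℕ)) : Prop :=
  ∀ a ∈ A, (a ∩ c).Infinite ∧ (a \ c).Infinite

/-- The reaping number 𝔯. -/
noncomputable def rNum : Cardinal :=
  sInf { c | ∃ A : Set (Set ℕ), Cardinal.mk A = c ∧ (∀ a ∈ A, a.Infinite) ∧
    ∀ d : Set ℕ, ¬ Reaps d A }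

/-- The splitting number 𝔰. -/
noncomputable def sNum : Cardinal :=
  sInf { c | ∃ A : Set (Set ℕ), Cardinal.mk A = c ∧ ∀ b : Set ℕ, b.Infinite →
    ∃ a ∈ A, (b ∩ a).Infinite ∧ (b \ a).Infinite }

/-- `next(a,k)`, the least element of `a` above `k`. -/
noncomputable def nxt (a : Set ℕ) (k : ℕ) : ℕ := sInf {n | n ∈ a ∧ k < n}

/-- ℕ*, the Stone–Čech remainder, realized as the space of free ultrafilters on ℕ. -/
abbrev NStar : Type := {x : Ultrafilter ℕ // (Filter.cofinite : Filter ℕ) ≤ ↑x}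

/-- For `a ⊆ ℕ`, the basic clopen set `a*` of free ultrafilters containing `a`. -/
def setStar (a : Set ℕ) : Set NStar := {x | a ∈ x.1}

/-- The ideal `I_A = { a ⊆ ℕ : a* ⊆ A }`. -/
def idealOf (A : Set NStar) : Set (Set ℕ) := {a | setStar a ⊆ A}

/-- `A` is almost clopen: the closure of an open set with a unique boundary point. -/
def AlmostClopen (A : Set NStar) : Prop :=
  (∃ U : Set NStar, IsOpen U ∧ A = closure U) ∧ ∃! x : NStar, x ∈ frontier A

/-- `x` is a tie-point as witnessed by the closed sets `A`, `B`. -/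
def TiePoint {X : Type*} [TopologicalSpace X] (x : X) (A B : Set X) : Prop :=
  IsClosed A ∧ IsClosed B ∧ A ∪ B = Set.univ ∧ A ∩ B = {x} ∧
    x ∈ closure (A \ {x}) ∧ x ∈ closure (B \ {x})

/-- An almost clopen set `A` is simple of type `κ`: `I_A` has a strictly ⊆*-increasing,
⊆*-cofinal chain of order type `κ`. -/
def SimpleType (A : Set NStar) (κ : Cardinal) : Prop :=
  ∃ a : Ordinal → Set ℕ,
    (∀ α, α < κ.ord → a α ∈ idealOf A) ∧
    (∀ α β, α < β → β < κ.ord → almostLE (a α) (a β) ∧ (a β \ a α).Infinite) ∧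
    (∀ c ∈ idealOf A, ∃ α, α < κ.ord ∧ almostLE c (a α))

/-- The family `A` converges to the ultrafilter `x`. -/
def Converges (A : Set (Set ℕ)) (x : Ultrafilter ℕ) : Prop :=
  ∀ U ∈ x, Cardinal.mk {a : Set ℕ // a ∈ A ∧ (a \ U).Infinite} < Cardinal.mk A

/-- `A` is hereditarily unreapable. -/
def HeredUnreapable (A : Set (Set ℕ)) : Prop :=
  ∀ B ⊆ A, (∃ c : Set ℕ, Reaps c B) → Cardinal.mk B < Cardinal.mk A

/-- `f <_x g` for an ultrafilter `x`. -/
def ultLT (x : Ultrafilter ℕ) (f g : ℕ → ℕ) : Prop := {n | f n < g n} ∈ x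

/-- A fixed `<*`-increasing `<*`-unbounded family `{f_ξ : ξ < 𝔟}` of strictly increasing
functions. -/
def UnbddChain (f : Ordinal → ℕ → ℕ) : Prop :=
  (∀ ξ, ξ < bNum.ord → StrictMono (f ξ)) ∧
  (∀ η ξ, η < ξ → ξ < bNum.ord → domLT (f η) (f ξ)) ∧
  (∀ g : ℕ → ℕ, ∃ ξ, ξ < bNum.ord ∧ ¬ domLT (f ξ) g)

/-- `x` is an almost `P_λ`-point. -/
def AlmostPPoint (x : Ultrafilter ℕ) (lam : Cardinal) : Prop :=
  ∀ F : Set (Set ℕ), (∀ U ∈ F, U ∈ x) → Cardinal.mk F < lam →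
    ∃ p : Set ℕ, p.Infinite ∧ ∀ U ∈ F, almostLE p U

/-- Every infinite set of naturals can be split. -/
lemma exists_split (b : Set ℕ) (hb : b.Infinite) :
    ∃ a : Set ℕ, (b ∩ a).Infinite ∧ (b \ a).Infinite := by
  have hb' : {n | n ∈ b}.Infinite := hb
  have hmem : ∀ n, Nat.nth (· ∈ b) n ∈ b := fun n => Nat.nth_mem_of_infinite hb' n
  have hinj : Function.Injective (Nat.nth (· ∈ b)) := (Nat.nth_injective hb')
  refine ⟨Nat.nth (· ∈ b) '' {k | Even k}, ?_, ?_⟩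
  · have h1 : (Nat.nth (· ∈ b) '' {k | Even k}).Infinite :=
      Set.Infinite.image (hinj.injOn) (Set.infinite_of_injective_forall_mem
        (f := fun k : ℕ => 2 * k) (fun i j h => by simpa using h) (fun k => ⟨k, two_mul k⟩))
    refine h1.mono ?_
    rintro n ⟨k, hk, rfl⟩
    exact ⟨hmem k, ⟨k, hk, rfl⟩⟩
  · have h1 : (Nat.nth (· ∈ b) '' {k | ¬ Even k}).Infinite :=
      Set.Infinite.image (hinj.injOn) (Set.infinite_of_injective_forall_mem
        (f := fun k : ℕ => 2 * k + 1) (fun i j h => by simpa using h) (fun k => by simp [Nat.even_add_one, Nat.even_mul]))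
    refine h1.mono ?_
    rintro n ⟨k, hk, rfl⟩
    refine ⟨hmem k, ?_⟩
    rintro ⟨j, hj, hjk⟩
    exact hk (hinj hjk ▸ hj)

lemma sNum_mem : sNum ∈ { c | ∃ A : Set (Set ℕ), Cardinal.mk A = c ∧ ∀ b : Set ℕ, b.Infinite →
    ∃ a ∈ A, (b ∩ a).Infinite ∧ (b \ a).Infinite } := by
  apply csInf_mem
  refine ⟨_, Set.univ, rfl, fun b hb => ?_⟩
  obtain ⟨a, h1, h2⟩ := exists_split b hb
  exact ⟨a, trivial, h1, h2⟩

theorem stmt11 (x : Ultrafilter ℕ) (hx : (Filter.cofinite : Filter ℕ) ≤ ↑x) :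
    ∃ F : Set (Set ℕ), (∀ U ∈ F, U ∈ x) ∧ Cardinal.mk F ≤ sNum ∧
      ¬ ∃ p : Set ℕ, p.Infinite ∧ ∀ U ∈ F, almostLE p U := by
  classical
  obtain ⟨A, hAcard, hAsplit⟩ := sNum_mem
  set g : Set ℕ → Set ℕ := fun a => if a ∈ x then a else aᶜ with hg
  refine ⟨g '' A, ?_, ?_, ?_⟩
  · rintro U ⟨a, _, rfl⟩
    by_cases h : a ∈ x
    · simpa [hg, h] using h
    · simpa [hg, h] using (Ultrafilter.compl_mem_iff_notMem.mpr h)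
  · calc Cardinal.mk (g '' A) ≤ Cardinal.mk A := Cardinal.mk_image_le
      _ = sNum := hAcard
  · rintro ⟨p, hp, hps⟩
    obtain ⟨a, ha, h1, h2⟩ := hAsplit p hp
    have hU := hps (g a) ⟨a, ha, rfl⟩
    by_cases h : a ∈ x
    · rw [hg] at hU; simp only [if_pos h] at hU
      exact h2 hU
    · rw [hg] at hU; simp only [if_neg h] at hU
      refine h1 ?_
      have : p \ aᶜ = p ∩ a := by ext n; simp [Set.mem_diff]
      rwa [almostLE, this] at hU
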